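/- If G is a connected graph on at least 5 vertices, then the automorphism group of the line graph L(G) is permutationally equivalent to the automorphism group of G acting naturally on the edge set of G. -/

import Mathlib

open SimpleGraph

namespace WhitneyAux

variable {V : Type*} {G : SimpleGraph V}

lemma edge_eq {e : G.edgeSet} {v w : V} (hvw : v ≠ w)
    (hv : v ∈ (e : Sym2 V)) (hw : w ∈ (e : Sym2 V)) : (e : Sym2 V) = s(v, w) :=
  (Sym2.mem_and_mem_iff hvw).1 ⟨hv, hw⟩

lemma common_unique {e₁ e₂ : G.edgeSet} (hne : e₁ ≠ e₂) {v w : V}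
    (hv1 : v ∈ (e₁ : Sym2 V)) (hv2 : v ∈ (e₂ : Sym2 V))
    (hw1 : w ∈ (e₁ : Sym2 V)) (hw2 : w ∈ (e₂ : Sym2 V)) : v = w := by
  by_contra h
  exact hne (Subtype.ext (((Sym2.mem_and_mem_iff h).1 ⟨hv1, hw1⟩).trans
    (((Sym2.mem_and_mem_iff h).1 ⟨hv2, hw2⟩).symm)))

lemma walk_closed {S : Set V} (hS : ∀ a ∈ S, ∀ b, G.Adj a b → b ∈ S)
    {x y : V} (w : G.Walk x y) (hx : x ∈ S) : y ∈ S := by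
  induction w with
  | nil => exact hx
  | cons h p ih => exact ih (hS _ hx _ h)

lemma exists_crossing {S : Set V} {x y : V} (w : G.Walk x y) (hx : x ∈ S) (hy : y ∉ S) :
    ∃ p q, G.Adj p q ∧ p ∈ S ∧ q ∉ S := by
  induction w with
  | nil => exact absurd hx hy
  | @cons a b c h p ih =>
    by_cases hb : b ∈ S
    · exact ih hb hy
    · exact ⟨a, b, h, hx, hb⟩

lemma exists_notin_quad [Fintype V] (hcard : 5 ≤ Fintype.card V) (a b c d : V) :
    ∃ x, x ∉ ({a, b, c, d} : Set V) := by
  classical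
  by_contra h
  push_neg at h
  have h1 : (Finset.univ : Finset V) ⊆ {a, b, c, d} := by
    intro x _
    have := h x
    simp only [Set.mem_insert_iff, Set.mem_singleton_iff] at this
    simp [this]
  have h2 := Finset.card_le_card h1
  have h3 : ({a, b, c, d} : Finset V).card ≤ 4 := by
    apply le_trans (Finset.card_insert_le _ _)
    have h4 := Finset.card_insert_le b ({c, d} : Finset V)
    have h5 := Finset.card_insert_le c ({d} : Finset V)
    simp only [Finset.card_singleton] at *
    omega
  rw [Finset.card_univ] at h2
  omega

lemma exists_edge_of_vertex [Fintype V] (hconn : G.Connected) (hcard : 5 ≤ Fintype.card V)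
    (v : V) : ∃ e : G.edgeSet, v ∈ (e : Sym2 V) := by
  obtain ⟨w, hw⟩ := Fintype.exists_ne_of_one_lt_card (by omega) v
  obtain ⟨p⟩ := hconn.preconnected v w
  cases p with
  | nil => exact absurd rfl hw.symm
  | cons h p => exact ⟨⟨s(v, _), h⟩, by simp⟩

lemma pendant_neighbor [Fintype V] (hconn : G.Connected) (hcard : 5 ≤ Fintype.card V)
    {v : V} {e : G.edgeSet} (hv : v ∈ (e : Sym2 V))
    (hpend : ∀ e' : G.edgeSet, v ∈ (e' : Sym2 V) → e' = e)
    {u : V} (hu : u ∈ (e : Sym2 V)) (huv : u ≠ v) :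
    ∃ f : G.edgeSet, f ≠ e ∧ u ∈ (f : Sym2 V) := by
  by_contra h
  push_neg at h
  -- every edge containing u is e
  have hupend : ∀ f : G.edgeSet, u ∈ (f : Sym2 V) → f = e := by
    intro f hf
    by_contra hne
    exact (h f (by exact fun hh => hne hh)) hf
  have he : (e : Sym2 V) = s(v, u) := edge_eq (Ne.symm huv) hv hu
  -- S = {v, u} is closed under adjacency
  have hS : ∀ a ∈ ({v, u} : Set V), ∀ b, G.Adj a b → b ∈ ({v, u} : Set V) := by
    rintro a (rfl | rfl) b hadj
    · have : (⟨s(a, b), hadj⟩ : G.edgeSet) = e := hpend _ (by simp)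
      have : s(a, b) = s(a, u) := by
        have h2 := congrArg Subtype.val this
        simp only at h2; rw [h2, he]
      simp only [Sym2.congr_right] at this
      simp [this]
    · have : (⟨s(a, b), hadj⟩ : G.edgeSet) = e := hupend _ (by simp)
      have h2 : s(a, b) = s(v, a) := by
        have h3 := congrArg Subtype.val this
        simp only at h3; rw [h3, he]
      rw [Sym2.eq_swap (a := v)] at h2
      simp only [Sym2.congr_right] at h2
      simp [h2]
  obtain ⟨x, hx⟩ := exists_notin_quad hcard v u u u
  obtain ⟨p⟩ := hconn.preconnected v x
  have := walk_closed hS p (by simp)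
  simp only [Set.mem_insert_iff, Set.mem_singleton_iff] at this hx
  tauto

def OddTo (f e₁ e₂ e₃ : G.edgeSet) : Prop :=
  Xor' (Xor' (G.lineGraph.Adj f e₁) (G.lineGraph.Adj f e₂)) (G.lineGraph.Adj f e₃)

lemma adj_of {f E : G.edgeSet} {u : V} (hu : u ∈ (f : Sym2 V)) (hu' : u ∈ (E : Sym2 V))
    (hne : f ≠ E) : G.lineGraph.Adj f E := lineGraph_adj_iff_exists.2 ⟨hne, u, hu, hu'⟩

lemma ne_edge {f E : G.edgeSet} {p q r s : V} (hf : (f : Sym2 V) = s(p, q))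
    (hE : (E : Sym2 V) = s(r, s)) (h : ¬((p = r ∧ q = s) ∨ (p = s ∧ q = r))) : f ≠ E := by
  intro he
  apply h
  have := congrArg Subtype.val he
  rw [hf, hE, Sym2.eq_iff] at this
  exact this

lemma not_adj_of {f E : G.edgeSet} {p q r s : V} (hf : (f : Sym2 V) = s(p, q))
    (hE : (E : Sym2 V) = s(r, s)) (h1 : p ≠ r) (h2 : p ≠ s) (h3 : q ≠ r) (h4 : q ≠ s) :
    ¬G.lineGraph.Adj f E := by
  rw [lineGraph_adj_iff_exists]
  rintro ⟨-, u, hu, hu'⟩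
  rw [hf, Sym2.mem_iff] at hu
  rw [hE, Sym2.mem_iff] at hu'
  rcases hu with rfl | rfl <;> rcases hu' with h | h <;> tauto

lemma triangle_not_all {a b c : V} (hab : a ≠ b) (hac : a ≠ c) (hbc : b ≠ c)
    {E₁ E₂ E₃ : G.edgeSet} (h₁ : (E₁ : Sym2 V) = s(a, b)) (h₂ : (E₂ : Sym2 V) = s(a, c))
    (h₃ : (E₃ : Sym2 V) = s(b, c)) (f : G.edgeSet) :
    ¬(G.lineGraph.Adj f E₁ ∧ G.lineGraph.Adj f E₂ ∧ G.lineGraph.Adj f E₃) := by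
  rintro ⟨hf1, hf2, hf3⟩
  rw [lineGraph_adj_iff_exists] at hf1 hf2 hf3
  obtain ⟨hne1, u, hu, hu1⟩ := hf1
  obtain ⟨hne2, u', hu', hu2⟩ := hf2
  obtain ⟨hne3, u'', hu'', hu3⟩ := hf3
  rw [h₁, Sym2.mem_iff] at hu1
  rw [h₂, Sym2.mem_iff] at hu2
  rw [h₃, Sym2.mem_iff] at hu3
  rcases hu1 with rfl | rfl
  · -- u = a ∈ f; f also meets {b,c}
    rcases hu3 with rfl | rfl
    · exact hne1 (Subtype.ext (by rw [edge_eq hab hu hu'', h₁]))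
    · exact hne2 (Subtype.ext (by rw [edge_eq hac hu hu'', h₂]))
  · -- u = b ∈ f; f meets {a,c}
    rcases hu2 with rfl | rfl
    · exact hne1 (Subtype.ext (by rw [edge_eq hab.symm hu hu', h₁, Sym2.eq_swap]))
    · exact hne3 (Subtype.ext (by rw [edge_eq hbc hu hu', h₃]))

lemma triangle_two {a b c : V} (hab : a ≠ b) (hac : a ≠ c) (hbc : b ≠ c)
    {E₁ E₂ E₃ : G.edgeSet} (h₁ : (E₁ : Sym2 V) = s(a, b)) (h₂ : (E₂ : Sym2 V) = s(a, c))
    (h₃ : (E₃ : Sym2 V) = s(b, c)) (f : G.edgeSet) (hf : G.lineGraph.Adj f E₁) :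
    G.lineGraph.Adj f E₂ ∨ G.lineGraph.Adj f E₃ := by
  rw [lineGraph_adj_iff_exists] at hf
  obtain ⟨hne1, u, hu, hu1⟩ := hf
  rw [h₁, Sym2.mem_iff] at hu1
  rcases hu1 with rfl | rfl
  · -- u = a ∈ f
    by_cases hfe2 : f = E₂
    · right
      rw [lineGraph_adj_iff_exists]
      refine ⟨?_, c, ?_, ?_⟩
      · intro hfe3
        rw [hfe2] at hfe3
        have := congrArg (Subtype.val) hfe3
        rw [h₂, h₃] at this
        rw [Sym2.eq_iff] at this
        tauto
      · rw [hfe2, h₂]; simp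
      · rw [h₃]; simp
    · left
      rw [lineGraph_adj_iff_exists]
      exact ⟨hfe2, u, hu, by rw [h₂]; simp⟩
  · -- u = b ∈ f
    by_cases hfe3 : f = E₃
    · left
      rw [lineGraph_adj_iff_exists]
      refine ⟨?_, c, ?_, ?_⟩
      · intro hfe2
        rw [hfe2] at hfe3
        have := congrArg (Subtype.val) hfe3
        rw [h₂, h₃] at this
        rw [Sym2.eq_iff] at this
        tauto
      · rw [hfe3, h₃]; simp
      · rw [h₂]; simp
    · right
      rw [lineGraph_adj_iff_exists]
      exact ⟨hfe3, u, hu, by rw [h₃]; simp⟩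

lemma star_iff_odd [Fintype V] (hconn : G.Connected) (hcard : 5 ≤ Fintype.card V)
    {e₁ e₂ e₃ : G.edgeSet} (h12 : G.lineGraph.Adj e₁ e₂) (h13 : G.lineGraph.Adj e₁ e₃)
    (h23 : G.lineGraph.Adj e₂ e₃) :
    (∃ v, v ∈ (e₁ : Sym2 V) ∧ v ∈ (e₂ : Sym2 V) ∧ v ∈ (e₃ : Sym2 V)) ↔
      ∃ f, OddTo f e₁ e₂ e₃ := by
  have hne12 : e₁ ≠ e₂ := (lineGraph_adj_iff_exists.1 h12).1
  have hne13 : e₁ ≠ e₃ := (lineGraph_adj_iff_exists.1 h13).1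
  have hne23 : e₂ ≠ e₃ := (lineGraph_adj_iff_exists.1 h23).1
  constructor
  · rintro ⟨v, hv1, hv2, hv3⟩
    obtain ⟨a, h₁, hav⟩ : ∃ a, (e₁ : Sym2 V) = s(v, a) ∧ a ≠ v :=
      ⟨Sym2.Mem.other hv1, (Sym2.other_spec hv1).symm,
        Sym2.other_ne (G.not_isDiag_of_mem_edgeSet e₁.2) hv1⟩
    obtain ⟨b, h₂, hbv⟩ : ∃ b, (e₂ : Sym2 V) = s(v, b) ∧ b ≠ v :=
      ⟨Sym2.Mem.other hv2, (Sym2.other_spec hv2).symm,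
        Sym2.other_ne (G.not_isDiag_of_mem_edgeSet e₂.2) hv2⟩
    obtain ⟨c, h₃, hcv⟩ : ∃ c, (e₃ : Sym2 V) = s(v, c) ∧ c ≠ v :=
      ⟨Sym2.Mem.other hv3, (Sym2.other_spec hv3).symm,
        Sym2.other_ne (G.not_isDiag_of_mem_edgeSet e₃.2) hv3⟩
    have hab : a ≠ b := fun h => hne12 (Subtype.ext (by rw [h₁, h₂, h]))
    have hac : a ≠ c := fun h => hne13 (Subtype.ext (by rw [h₁, h₃, h]))
    have hbc : b ≠ c := fun h => hne23 (Subtype.ext (by rw [h₂, h₃, h]))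
    obtain ⟨x, hx⟩ := exists_notin_quad hcard v a b c
    obtain ⟨p⟩ := hconn.preconnected v x
    obtain ⟨y, z, hyz, hyS, hzS⟩ := exists_crossing p (by simp) hx
    simp only [Set.mem_insert_iff, Set.mem_singleton_iff] at hyS hzS
    push_neg at hzS
    obtain ⟨hzv, hza, hzb, hzc⟩ := hzS
    refine ⟨⟨s(y, z), hyz⟩, ?_⟩
    have hfval : ((⟨s(y, z), hyz⟩ : G.edgeSet) : Sym2 V) = s(y, z) := rfl
    rcases hyS with hy | hy | hy | hy <;> subst hy
    · -- y = v : adjacent to all three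
      have A1 : G.lineGraph.Adj ⟨s(y, z), hyz⟩ e₁ :=
        adj_of (by simp) hv1 (ne_edge hfval h₁ (by tauto))
      have A2 : G.lineGraph.Adj ⟨s(y, z), hyz⟩ e₂ :=
        adj_of (by simp) hv2 (ne_edge hfval h₂ (by tauto))
      have A3 : G.lineGraph.Adj ⟨s(y, z), hyz⟩ e₃ :=
        adj_of (by simp) hv3 (ne_edge hfval h₃ (by tauto))
      simp [OddTo, Xor', A1, A2, A3]
    · -- y = a
      have A1 : G.lineGraph.Adj ⟨s(y, z), hyz⟩ e₁ :=
        adj_of (Sym2.mem_mk_left _ _) (h₁ ▸ Sym2.mem_mk_right _ _)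
          (ne_edge hfval h₁ (by tauto))
      have A2 : ¬G.lineGraph.Adj ⟨s(y, z), hyz⟩ e₂ := not_adj_of hfval h₂ hav hab hzv hzb
      have A3 : ¬G.lineGraph.Adj ⟨s(y, z), hyz⟩ e₃ := not_adj_of hfval h₃ hav hac hzv hzc
      simp [OddTo, Xor', A1, A2, A3]
    · -- y = b
      have A2 : G.lineGraph.Adj ⟨s(y, z), hyz⟩ e₂ :=
        adj_of (Sym2.mem_mk_left _ _) (h₂ ▸ Sym2.mem_mk_right _ _)
          (ne_edge hfval h₂ (by tauto))
      have A1 : ¬G.lineGraph.Adj ⟨s(y, z), hyz⟩ e₁ :=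
        not_adj_of hfval h₁ hbv (fun h => hab h.symm) hzv hza
      have A3 : ¬G.lineGraph.Adj ⟨s(y, z), hyz⟩ e₃ := not_adj_of hfval h₃ hbv hbc hzv hzc
      simp [OddTo, Xor', A1, A2, A3]
    · -- y = c
      have A3 : G.lineGraph.Adj ⟨s(y, z), hyz⟩ e₃ :=
        adj_of (Sym2.mem_mk_left _ _) (h₃ ▸ Sym2.mem_mk_right _ _)
          (ne_edge hfval h₃ (by tauto))
      have A1 : ¬G.lineGraph.Adj ⟨s(y, z), hyz⟩ e₁ :=
        not_adj_of hfval h₁ hcv (fun h => hac h.symm) hzv hza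
      have A2 : ¬G.lineGraph.Adj ⟨s(y, z), hyz⟩ e₂ :=
        not_adj_of hfval h₂ hcv (fun h => hbc h.symm) hzv hzb
      simp [OddTo, Xor', A1, A2, A3]
  · rintro ⟨f, hf⟩
    by_contra hcom
    obtain ⟨-, a, ha1, ha2⟩ := lineGraph_adj_iff_exists.1 h12
    obtain ⟨-, b, hb1, hb3⟩ := lineGraph_adj_iff_exists.1 h13
    obtain ⟨-, c, hc2, hc3⟩ := lineGraph_adj_iff_exists.1 h23
    have hab : a ≠ b := fun h => hcom ⟨a, ha1, ha2, h ▸ hb3⟩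
    have hac : a ≠ c := fun h => hcom ⟨a, ha1, ha2, h ▸ hc3⟩
    have hbc : b ≠ c := fun h => hcom ⟨b, hb1, h ▸ hc2, hb3⟩
    have h₁ : (e₁ : Sym2 V) = s(a, b) := edge_eq hab ha1 hb1
    have h₂ : (e₂ : Sym2 V) = s(a, c) := edge_eq hac ha2 hc2
    have h₃ : (e₃ : Sym2 V) = s(b, c) := edge_eq hbc hb3 hc3
    have T1 := triangle_two hab hac hbc h₁ h₂ h₃ f
    have T2 := triangle_two hac hab (Ne.symm hbc) h₂ h₁ (by rw [h₃, Sym2.eq_swap]) f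
    have T3 := triangle_two hbc (Ne.symm hab) (Ne.symm hac) h₃ (by rw [h₁, Sym2.eq_swap])
      (by rw [h₂, Sym2.eq_swap]) f
    have TA := triangle_not_all hab hac hbc h₁ h₂ h₃ f
    simp only [OddTo, Xor'] at hf
    rcases hf with ⟨h | h, hn3⟩ | ⟨h3, hn⟩
    · rcases T1 h.1 with h' | h'
      exacts [h.2 h', hn3 h']
    · rcases T2 h.1 with h' | h'
      exacts [h.2 h', hn3 h']
    · rw [not_xor] at hn
      rcases T3 h3 with h' | h'
      · exact TA ⟨h', hn.1 h', h3⟩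
      · exact TA ⟨hn.2 h', h', h3⟩

lemma triple_common_map [Fintype V] (hconn : G.Connected) (hcard : 5 ≤ Fintype.card V)
    (ψ : G.lineGraph ≃g G.lineGraph) {e₁ e₂ e₃ : G.edgeSet}
    (h12 : G.lineGraph.Adj e₁ e₂) (h13 : G.lineGraph.Adj e₁ e₃) (h23 : G.lineGraph.Adj e₂ e₃)
    (hv : ∃ v, v ∈ (e₁ : Sym2 V) ∧ v ∈ (e₂ : Sym2 V) ∧ v ∈ (e₃ : Sym2 V)) :
    ∃ w, w ∈ (ψ e₁ : Sym2 V) ∧ w ∈ (ψ e₂ : Sym2 V) ∧ w ∈ (ψ e₃ : Sym2 V) := by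
  have h12' : G.lineGraph.Adj (ψ e₁) (ψ e₂) := ψ.map_rel_iff.2 h12
  have h13' : G.lineGraph.Adj (ψ e₁) (ψ e₃) := ψ.map_rel_iff.2 h13
  have h23' : G.lineGraph.Adj (ψ e₂) (ψ e₃) := ψ.map_rel_iff.2 h23
  rw [star_iff_odd hconn hcard h12 h13 h23] at hv
  rw [star_iff_odd hconn hcard h12' h13' h23']
  obtain ⟨f, hf⟩ := hv
  refine ⟨ψ f, ?_⟩
  unfold OddTo at hf ⊢
  simpa only [ψ.map_rel_iff] using hf

lemma star_map [Fintype V] (hconn : G.Connected) (hcard : 5 ≤ Fintype.card V)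
    (ψ : G.lineGraph ≃g G.lineGraph) {v : V} {e₁ e₂ : G.edgeSet} (hne : e₁ ≠ e₂)
    (h1 : v ∈ (e₁ : Sym2 V)) (h2 : v ∈ (e₂ : Sym2 V)) :
    ∃ w, ∀ e : G.edgeSet, v ∈ (e : Sym2 V) ↔ w ∈ (ψ e : Sym2 V) := by
  have h12 : G.lineGraph.Adj e₁ e₂ := lineGraph_adj_iff_exists.2 ⟨hne, v, h1, h2⟩
  have h12' : G.lineGraph.Adj (ψ e₁) (ψ e₂) := ψ.map_rel_iff.2 h12
  obtain ⟨hne', w, hw1, hw2⟩ := lineGraph_adj_iff_exists.1 h12'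
  refine ⟨w, fun e => ⟨fun he => ?_, fun he => ?_⟩⟩
  · by_cases he1 : e = e₁
    · exact he1 ▸ hw1
    by_cases he2 : e = e₂
    · exact he2 ▸ hw2
    have h13 : G.lineGraph.Adj e₁ e := lineGraph_adj_iff_exists.2 ⟨Ne.symm he1, v, h1, he⟩
    have h23 : G.lineGraph.Adj e₂ e := lineGraph_adj_iff_exists.2 ⟨Ne.symm he2, v, h2, he⟩
    obtain ⟨x, hx1, hx2, hx3⟩ :=
      triple_common_map hconn hcard ψ h12 h13 h23 ⟨v, h1, h2, he⟩
    rwa [common_unique hne' hx1 hx2 hw1 hw2] at hx3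
  · by_cases he1 : e = e₁
    · exact he1 ▸ h1
    by_cases he2 : e = e₂
    · exact he2 ▸ h2
    have hne1' : ψ e₁ ≠ ψ e := fun h => he1 (ψ.injective h).symm
    have hne2' : ψ e₂ ≠ ψ e := fun h => he2 (ψ.injective h).symm
    have h13 : G.lineGraph.Adj (ψ e₁) (ψ e) := lineGraph_adj_iff_exists.2 ⟨hne1', w, hw1, he⟩
    have h23 : G.lineGraph.Adj (ψ e₂) (ψ e) := lineGraph_adj_iff_exists.2 ⟨hne2', w, hw2, he⟩
    obtain ⟨x, hx1, hx2, hx3⟩ :=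
      triple_common_map hconn hcard ψ.symm h12' h13 h23 ⟨w, hw1, hw2, he⟩
    simp only [RelIso.symm_apply_apply] at hx1 hx2 hx3
    rwa [common_unique hne hx1 hx2 h1 h2] at hx3

lemma stars_ne [Fintype V] (hconn : G.Connected) (hcard : 5 ≤ Fintype.card V)
    {a b : V} (hab : a ≠ b) (h : ∀ e : G.edgeSet, a ∈ (e : Sym2 V) ↔ b ∈ (e : Sym2 V)) :
    False := by
  obtain ⟨e, hae⟩ := exists_edge_of_vertex hconn hcard a
  have hbe : b ∈ (e : Sym2 V) := (h e).1 hae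
  have hpend : ∀ e' : G.edgeSet, a ∈ (e' : Sym2 V) → e' = e := by
    intro e' ha'
    exact Subtype.ext (by rw [edge_eq hab ha' ((h e').1 ha'), edge_eq hab hae hbe])
  obtain ⟨f, hfe, hbf⟩ := pendant_neighbor hconn hcard hae hpend hbe (Ne.symm hab)
  exact hfe (hpend f ((h f).2 hbf))

/-- Existence of the image vertex: `ψ` maps the star of `v` to the star of some `w`. -/

lemma good_exists [Fintype V] (hconn : G.Connected) (hcard : 5 ≤ Fintype.card V)
    (ψ : G.lineGraph ≃g G.lineGraph) (v : V) :
    ∃ w, ∀ e : G.edgeSet, v ∈ (e : Sym2 V) ↔ w ∈ (ψ e : Sym2 V) := by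
  by_cases hdeg : ∃ e₁ e₂ : G.edgeSet, e₁ ≠ e₂ ∧ v ∈ (e₁ : Sym2 V) ∧ v ∈ (e₂ : Sym2 V)
  · obtain ⟨e₁, e₂, hne, h1, h2⟩ := hdeg
    exact star_map hconn hcard ψ hne h1 h2
  · push_neg at hdeg
    obtain ⟨e, hve⟩ := exists_edge_of_vertex hconn hcard v
    have hpend : ∀ e' : G.edgeSet, v ∈ (e' : Sym2 V) → e' = e := by
      intro e' h'
      by_contra hne
      exact (hdeg e' e hne h') hve
    set u := Sym2.Mem.other hve with hu_def
    have hu : u ∈ (e : Sym2 V) := Sym2.other_mem hve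
    have huv : u ≠ v := Sym2.other_ne (G.not_isDiag_of_mem_edgeSet e.2) hve
    have he_eq : (e : Sym2 V) = s(v, u) := (Sym2.other_spec hve).symm
    obtain ⟨f, hfe, huf⟩ := pendant_neighbor hconn hcard hve hpend hu huv
    obtain ⟨wu, hwu⟩ := star_map hconn hcard ψ (Ne.symm hfe) hu huf
    have hwue : wu ∈ (ψ e : Sym2 V) := (hwu e).1 hu
    set w := Sym2.Mem.other hwue with hw_def
    have hw : w ∈ (ψ e : Sym2 V) := Sym2.other_mem hwue
    have hwne : w ≠ wu :=
      Sym2.other_ne (G.not_isDiag_of_mem_edgeSet (ψ e).2) hwue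
    refine ⟨w, fun e' => ⟨fun hv' => (hpend e' hv') ▸ hw, fun hw' => ?_⟩⟩
    -- suffices e' = e
    by_contra hv'
    have hne' : e' ≠ e := fun h => hv' (h ▸ hve)
    have hne'' : ψ e ≠ ψ e' := fun h => hne' (ψ.injective h).symm
    obtain ⟨x, hx⟩ := star_map hconn hcard ψ.symm hne'' hw hw'
    have hx' : ∀ E : G.edgeSet, w ∈ (ψ E : Sym2 V) ↔ x ∈ (E : Sym2 V) := fun E => by
      have := hx (ψ E); rwa [RelIso.symm_apply_apply] at this
    have hxe : x ∈ (e : Sym2 V) := (hx' e).1 hw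
    rw [he_eq, Sym2.mem_iff] at hxe
    rcases hxe with rfl | rfl
    · -- x = v : then v ∈ e' from w ∈ ψ e', contradiction
      exact hv' ((hx' e').1 hw')
    · -- x = u : then w has the same ψ-star as wu, so w = wu
      apply hwne
      have h1 : w ∈ (ψ f : Sym2 V) := (hx' f).2 huf
      have h2 : wu ∈ (ψ f : Sym2 V) := (hwu f).1 huf
      have hnef : ψ e ≠ ψ f := fun h => hfe (ψ.injective h).symm
      exact common_unique hnef hw h1 hwue h2

lemma good_unique [Fintype V] (hconn : G.Connected) (hcard : 5 ≤ Fintype.card V)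
    (ψ : G.lineGraph ≃g G.lineGraph) {v w w' : V}
    (hw : ∀ e : G.edgeSet, v ∈ (e : Sym2 V) ↔ w ∈ (ψ e : Sym2 V))
    (hw' : ∀ e : G.edgeSet, v ∈ (e : Sym2 V) ↔ w' ∈ (ψ e : Sym2 V)) : w = w' := by
  by_cases hdeg : ∃ e₁ e₂ : G.edgeSet, e₁ ≠ e₂ ∧ v ∈ (e₁ : Sym2 V) ∧ v ∈ (e₂ : Sym2 V)
  · obtain ⟨e₁, e₂, hne, h1, h2⟩ := hdeg
    have hne' : ψ e₁ ≠ ψ e₂ := fun h => hne (ψ.injective h)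
    exact common_unique hne' ((hw e₁).1 h1) ((hw e₂).1 h2) ((hw' e₁).1 h1) ((hw' e₂).1 h2)
  · push_neg at hdeg
    obtain ⟨e, hve⟩ := exists_edge_of_vertex hconn hcard v
    have hpend : ∀ e' : G.edgeSet, v ∈ (e' : Sym2 V) → e' = e := by
      intro e' h'
      by_contra hne
      exact (hdeg e' e hne h') hve
    have hu := Sym2.other_mem hve
    have huv : Sym2.Mem.other hve ≠ v := Sym2.other_ne (G.not_isDiag_of_mem_edgeSet e.2) hve
    obtain ⟨f, hfe, huf⟩ := pendant_neighbor hconn hcard hve hpend hu huv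
    obtain ⟨wu, hwu⟩ := star_map hconn hcard ψ (Ne.symm hfe) hu huf
    have hkey : ∀ z, (∀ e' : G.edgeSet, v ∈ (e' : Sym2 V) ↔ z ∈ (ψ e' : Sym2 V)) → wu ≠ z := by
      intro z hz heq
      subst heq
      exact stars_ne hconn hcard (Ne.symm huv)
        (fun e' => (hz e').trans (hwu e').symm)
    by_contra hww
    have hwe : w ∈ (ψ e : Sym2 V) := (hw e).1 hve
    have hwe' : w' ∈ (ψ e : Sym2 V) := (hw' e).1 hve
    have heq : (ψ e : Sym2 V) = s(w, w') := edge_eq hww hwe hwe'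
    have hwue : wu ∈ (ψ e : Sym2 V) := (hwu e).1 hu
    rw [heq, Sym2.mem_iff] at hwue
    rcases hwue with h | h
    · exact hkey w hw h
    · exact hkey w' hw' h

end WhitneyAux

open WhitneyAux

theorem aut_lineGraph_eq_aut {V : Type*} [Fintype V] (G : SimpleGraph V)
    (hconn : G.Connected) (hcard : 5 ≤ Fintype.card V) :
    ∀ ψ : G.lineGraph ≃g G.lineGraph,
      ∃! γ : G ≃g G, ∀ e : G.edgeSet, ψ e = γ.mapEdgeSet e := by
  intro ψ
  classical
  choose γ hγ using fun v => good_exists hconn hcard ψ v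
  have hinj : Function.Injective γ := by
    intro a b h
    by_contra hab
    exact stars_ne hconn hcard hab
      (fun e => ((hγ a e).trans (by rw [h])).trans (hγ b e).symm)
  have hedge : ∀ (x y : V) (h : G.Adj x y),
      ((ψ ⟨s(x, y), h⟩ : G.edgeSet) : Sym2 V) = s(γ x, γ y) := by
    intro x y h
    have hx : γ x ∈ (ψ ⟨s(x, y), h⟩ : Sym2 V) :=
      (hγ x ⟨s(x, y), h⟩).1 (Sym2.mem_mk_left _ _)
    have hy : γ y ∈ (ψ ⟨s(x, y), h⟩ : Sym2 V) :=
      (hγ y ⟨s(x, y), h⟩).1 (Sym2.mem_mk_right _ _)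
    exact edge_eq (hinj.ne h.ne) hx hy
  have hbij : Function.Bijective γ := Finite.injective_iff_bijective.1 hinj
  have hsym2 : ∀ z : Sym2 V, ∃ x y, z = s(x, y) := fun z =>
    Sym2.ind (fun x y => ⟨x, y, rfl⟩) z
  have hmaprel : ∀ {a b : V}, G.Adj (γ a) (γ b) ↔ G.Adj a b := by
    intro a b
    constructor
    · intro h
      obtain ⟨x, y, hxy⟩ := hsym2 ((ψ.symm ⟨s(γ a, γ b), h⟩ : G.edgeSet) : Sym2 V)
      have hadjxy : G.Adj x y := (G.mem_edgeSet).1 (hxy ▸ (ψ.symm ⟨s(γ a, γ b), h⟩).2)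
      have he : (⟨s(x, y), hadjxy⟩ : G.edgeSet) = ψ.symm ⟨s(γ a, γ b), h⟩ :=
        Subtype.ext hxy.symm
      have := hedge x y hadjxy
      rw [he, RelIso.apply_symm_apply] at this
      have : s(γ x, γ y) = s(γ a, γ b) := this.symm
      rw [Sym2.eq_iff] at this
      rcases this with ⟨h1, h2⟩ | ⟨h1, h2⟩
      · rw [hinj h1, hinj h2] at hadjxy; exact hadjxy
      · rw [hinj h1, hinj h2] at hadjxy; exact hadjxy.symm
    · intro h
      have h2 := (ψ ⟨s(a, b), h⟩).2
      rw [hedge a b h] at h2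
      exact G.mem_edgeSet.1 h2
  refine ⟨{ toEquiv := Equiv.ofBijective γ hbij, map_rel_iff' := hmaprel }, ?_, ?_⟩
  · intro e
    obtain ⟨x, y, hxy⟩ := hsym2 (e : Sym2 V)
    have hadjxy : G.Adj x y := G.mem_edgeSet.1 (hxy ▸ e.2)
    have he : e = ⟨s(x, y), hadjxy⟩ := Subtype.ext hxy
    apply Subtype.ext
    rw [he]
    show ((ψ ⟨s(x, y), hadjxy⟩ : G.edgeSet) : Sym2 V) = _
    rw [hedge x y hadjxy]
    simp only [Iso.mapEdgeSet, Hom.mapEdgeSet, RelEmbedding.coe_toEmbedding,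
      RelIso.coe_toRelEmbedding, Equiv.coe_fn_mk, Sym2.map_pair_eq]
    rfl
  · intro γ' hγ'
    apply RelIso.ext
    intro v
    have hgood' : ∀ e : G.edgeSet, v ∈ (e : Sym2 V) ↔ γ' v ∈ (ψ e : Sym2 V) := by
      intro e
      rw [hγ' e]
      have hval : ((γ'.mapEdgeSet e : G.edgeSet) : Sym2 V) = Sym2.map γ' (e : Sym2 V) := rfl
      rw [hval, Sym2.mem_map]
      constructor
      · intro hv; exact ⟨v, hv, rfl⟩
      · rintro ⟨a, ha, haeq⟩
        rwa [γ'.injective haeq] at ha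
    exact good_unique hconn hcard ψ hgood' (hγ v)
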